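/- Every finite nilpotent group of nilpotency class at most 2 and of odd order satisfies the Ingleton inequality: for any four subgroups H₁, H₂, H₃, H₄ of such a group G, |H₁|·|H₂|·|H₃∩H₄|·|H₁∩H₂∩H₃|·|H₁∩H₂∩H₄| ≥ |H₁∩H₂|·|H₁∩H₃|·|H₁∩H₄|·|H₂∩H₃|·|H₂∩H₄|. -/

import Mathlib

open commutatorElement

section BaerTrick

variable {G : Type*} [Group G]

private lemma comm_dist_right (hc : ∀ a b : G, ⁅a, b⁆ ∈ Subgroup.center G) (x y z : G) :
    ⁅x, y * z⁆ = ⁅x, y⁆ * ⁅x, z⁆ := by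
  have h : y⁻¹ * ⁅x, z⁆ = ⁅x, z⁆ * y⁻¹ := Subgroup.mem_center_iff.mp (hc x z) y⁻¹
  have h2 : ⁅x, y⁆ * ⁅x, z⁆ = x * y * x⁻¹ * (y⁻¹ * ⁅x, z⁆) := by
    rw [commutatorElement_def x y]; group
  rw [h2, h]
  simp only [commutatorElement_def]
  group

private lemma comm_dist_left (hc : ∀ a b : G, ⁅a, b⁆ ∈ Subgroup.center G) (x y z : G) :
    ⁅x * y, z⁆ = ⁅x, z⁆ * ⁅y, z⁆ := by
  have hx : x * ⁅y, z⁆ = ⁅y, z⁆ * x := Subgroup.mem_center_iff.mp (hc y z) x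
  have hxz : ⁅y, z⁆ * ⁅x, z⁆ = ⁅x, z⁆ * ⁅y, z⁆ := Subgroup.mem_center_iff.mp (hc x z) ⁅y, z⁆
  calc ⁅x * y, z⁆ = x * ⁅y, z⁆ * x⁻¹ * ⁅x, z⁆ := by
        simp only [commutatorElement_def]; group
    _ = ⁅y, z⁆ * x * x⁻¹ * ⁅x, z⁆ := by rw [hx]
    _ = ⁅y, z⁆ * ⁅x, z⁆ := by group
    _ = ⁅x, z⁆ * ⁅y, z⁆ := hxz

private lemma comm_central_right (x w c : G) (hcc : c ∈ Subgroup.center G) :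
    ⁅x, w * c⁆ = ⁅x, w⁆ := by
  have h1 : x * c = c * x := Subgroup.mem_center_iff.mp hcc x
  have h2 : w * c = c * w := Subgroup.mem_center_iff.mp hcc w
  calc ⁅x, w * c⁆ = x * w * (c * x⁻¹) * c⁻¹ * w⁻¹ := by
        simp only [commutatorElement_def]; group
    _ = x * w * (x⁻¹ * c) * c⁻¹ * w⁻¹ := by
        rw [show c * x⁻¹ = x⁻¹ * c by
          rw [eq_comm, ← mul_left_cancel_iff (a := x), ← mul_assoc, ← mul_assoc, h1]; group]
    _ = ⁅x, w⁆ := by simp only [commutatorElement_def]; group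

private lemma comm_central_left (x w c : G) (hcc : c ∈ Subgroup.center G) :
    ⁅w * c, x⁆ = ⁅w, x⁆ := by
  rw [← commutatorElement_inv, comm_central_right x w c hcc, commutatorElement_inv]

end BaerTrick


private lemma baer_assoc {G : Type*} [Group G] (m : ℕ)
    (hc : ∀ a b : G, ⁅a, b⁆ ∈ Subgroup.center G) (a b c : G) :
    (a * b * ⁅b, a⁆ ^ m) * c * ⁅c, a * b * ⁅b, a⁆ ^ m⁆ ^ m
      = a * (b * c * ⁅c, b⁆ ^ m) * ⁅b * c * ⁅c, b⁆ ^ m, a⁆ ^ m := by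
  have hpow : ∀ u v : G, ⁅u, v⁆ ^ m ∈ Subgroup.center G := fun u v =>
    Subgroup.pow_mem _ (hc u v) m
  have h1 : ⁅c, a * b * ⁅b, a⁆ ^ m⁆ = ⁅c, a⁆ * ⁅c, b⁆ := by
    rw [comm_central_right c (a * b) (⁅b, a⁆ ^ m) (hpow b a), comm_dist_right hc]
  have h2 : ⁅b * c * ⁅c, b⁆ ^ m, a⁆ = ⁅b, a⁆ * ⁅c, a⁆ := by
    rw [comm_central_left a (b * c) (⁅c, b⁆ ^ m) (hpow c b), comm_dist_left hc]
  rw [h1, h2]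
  have hcom : Commute ⁅c, a⁆ ⁅c, b⁆ := (Subgroup.mem_center_iff.mp (hc c a) _).symm
  have hcom2 : Commute ⁅b, a⁆ ⁅c, a⁆ := (Subgroup.mem_center_iff.mp (hc b a) _).symm
  rw [hcom.mul_pow, hcom2.mul_pow]
  have sw : ∀ (u v : G), v ∈ Subgroup.center G → u * v = v * u := fun u v hv =>
    Subgroup.mem_center_iff.mp hv u
  have e1 : a * b * ⁅b, a⁆ ^ m * c = a * b * c * ⁅b, a⁆ ^ m := by
    rw [mul_assoc (a * b), ← sw c _ (hpow b a), ← mul_assoc]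
  rw [e1]
  rw [show a * (b * c * ⁅c, b⁆ ^ m) * (⁅b, a⁆ ^ m * ⁅c, a⁆ ^ m)
      = a * b * c * (⁅c, b⁆ ^ m * (⁅b, a⁆ ^ m * ⁅c, a⁆ ^ m)) by group]
  rw [show a * b * c * ⁅b, a⁆ ^ m * (⁅c, a⁆ ^ m * ⁅c, b⁆ ^ m)
      = a * b * c * (⁅b, a⁆ ^ m * (⁅c, a⁆ ^ m * ⁅c, b⁆ ^ m)) by group]
  congr 1
  rw [show ⁅b, a⁆ ^ m * (⁅c, a⁆ ^ m * ⁅c, b⁆ ^ m)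
      = ⁅b, a⁆ ^ m * ⁅c, a⁆ ^ m * ⁅c, b⁆ ^ m by group]
  rw [sw (⁅b, a⁆ ^ m * ⁅c, a⁆ ^ m) (⁅c, b⁆ ^ m) (hpow c b)]

private lemma baer_comm {G : Type*} [Group G] (m : ℕ)
    (hc : ∀ a b : G, ⁅a, b⁆ ∈ Subgroup.center G) (hm : ∀ g : G, g ^ (2 * m) = g) (a b : G) :
    a * b * ⁅b, a⁆ ^ m = b * a * ⁅a, b⁆ ^ m := by
  have hab : a * b = b * a * ⁅a, b⁆ := by
    rw [Subgroup.mem_center_iff.mp (hc a b) (b * a)]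
    simp only [commutatorElement_def]; group
  rw [hab, mul_assoc (b * a)]
  congr 1
  have hba : ⁅b, a⁆ = ⁅a, b⁆⁻¹ := (commutatorElement_inv a b).symm
  rw [hba, inv_pow, mul_inv_eq_iff_eq_mul, ← pow_add, ← two_mul, hm]

private def Baer (G : Type*) : Type _ := G

private def Baer.up {G : Type*} : G → Baer G := id
private def Baer.down {G : Type*} : Baer G → G := id

private def baerCG {G : Type*} [Group G] (m : ℕ)
    (hc : ∀ a b : G, ⁅a, b⁆ ∈ Subgroup.center G)
    (hm : ∀ g : G, g ^ (2 * m) = g) : CommGroup (Baer G) where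
  mul x y := Baer.up (x.down * y.down * ⁅y.down, x.down⁆ ^ m)
  one := Baer.up 1
  inv x := Baer.up x.down⁻¹
  mul_assoc x y z := baer_assoc m hc x.down y.down z.down
  one_mul x := show Baer.up (1 * x.down * ⁅x.down, 1⁆ ^ m) = x by
    rw [one_mul, commutatorElement_one_right, one_pow, mul_one]; rfl
  mul_one x := show Baer.up (x.down * (1 : G) * ⁅(1 : G), x.down⁆ ^ m) = x by
    rw [mul_one, commutatorElement_one_left, one_pow, mul_one]; rfl
  inv_mul_cancel x := show Baer.up (x.down⁻¹ * x.down * ⁅x.down, x.down⁻¹⁆ ^ m) = Baer.up 1 by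
    rw [inv_mul_cancel, show ⁅(x.down : G), x.down⁻¹⁆ = 1 by
      simp only [commutatorElement_def]; group, one_pow, mul_one]
  mul_comm x y := baer_comm m hc hm x.down y.down


private lemma card_sup_mul_card_inf {A : Type*} [CommGroup A] [Finite A] (H K : Subgroup A) :
    Nat.card (H ⊔ K : Subgroup A) * Nat.card (H ⊓ K : Subgroup A) = Nat.card H * Nat.card K := by
  have h1 : Nat.card (K.subgroupOf (H ⊔ K)) * (K.subgroupOf (H ⊔ K)).index
      = Nat.card (H ⊔ K : Subgroup A) := Subgroup.card_mul_index _
  have h2 : Nat.card ((K ⊓ H).subgroupOf H) * ((K ⊓ H).subgroupOf H).index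
      = Nat.card H := Subgroup.card_mul_index _
  have e1 : Nat.card (K.subgroupOf (H ⊔ K)) = Nat.card K :=
    Nat.card_congr (Subgroup.subgroupOfEquivOfLe le_sup_right).toEquiv
  have e2 : Nat.card ((K ⊓ H).subgroupOf H) = Nat.card (H ⊓ K : Subgroup A) :=
    (Nat.card_congr (Subgroup.subgroupOfEquivOfLe inf_le_right).toEquiv).trans
      (by rw [inf_comm])
  have e3 : (K.subgroupOf (H ⊔ K)).index = ((K ⊓ H).subgroupOf H).index := by
    show K.relIndex (H ⊔ K) = (K ⊓ H).relIndex H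
    rw [Subgroup.inf_relIndex_right, Subgroup.relIndex_sup_right]
  calc Nat.card (H ⊔ K : Subgroup A) * Nat.card (H ⊓ K : Subgroup A)
      = (Nat.card (K.subgroupOf (H ⊔ K)) * (K.subgroupOf (H ⊔ K)).index) *
        Nat.card ((K ⊓ H).subgroupOf H) := by rw [h1, e2]
    _ = Nat.card K * (Nat.card ((K ⊓ H).subgroupOf H) * ((K ⊓ H).subgroupOf H).index) := by
        rw [e1, e3]; ring
    _ = Nat.card K * Nat.card H := by rw [h2]
    _ = Nat.card H * Nat.card K := mul_comm _ _

private lemma abelian_ingleton {A : Type*} [CommGroup A] [Finite A]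
    (H₁ H₂ H₃ H₄ : Subgroup A) :
    Nat.card (H₁ ⊓ H₂ : Subgroup A) * Nat.card (H₁ ⊓ H₃ : Subgroup A) *
      Nat.card (H₁ ⊓ H₄ : Subgroup A) * Nat.card (H₂ ⊓ H₃ : Subgroup A) *
      Nat.card (H₂ ⊓ H₄ : Subgroup A) ≤
    Nat.card H₁ * Nat.card H₂ * Nat.card (H₃ ⊓ H₄ : Subgroup A) *
      Nat.card (H₁ ⊓ H₂ ⊓ H₃ : Subgroup A) * Nat.card (H₁ ⊓ H₂ ⊓ H₄ : Subgroup A) := by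
  set S := H₁ ⊔ H₂ with hS
  -- step 1 template
  have step : ∀ K : Subgroup A,
      Nat.card (H₁ ⊓ K : Subgroup A) * Nat.card (H₂ ⊓ K : Subgroup A) ≤
      Nat.card (K ⊓ S : Subgroup A) * Nat.card (H₁ ⊓ H₂ ⊓ K : Subgroup A) := by
    intro K
    have hinf : (H₁ ⊓ K) ⊓ (H₂ ⊓ K) = H₁ ⊓ H₂ ⊓ K := by
      rw [inf_inf_inf_comm, inf_idem]
    have hsup : (H₁ ⊓ K) ⊔ (H₂ ⊓ K) ≤ K ⊓ S :=
      sup_le (le_inf inf_le_right (inf_le_left.trans le_sup_left))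
        (le_inf inf_le_right (inf_le_left.trans le_sup_right))
    calc Nat.card (H₁ ⊓ K : Subgroup A) * Nat.card (H₂ ⊓ K : Subgroup A)
        = Nat.card ((H₁ ⊓ K) ⊔ (H₂ ⊓ K) : Subgroup A) *
          Nat.card (H₁ ⊓ H₂ ⊓ K : Subgroup A) := by
          rw [← hinf, card_sup_mul_card_inf]
      _ ≤ _ := Nat.mul_le_mul_right _ (Subgroup.card_le_of_le hsup)
  have step3 : Nat.card (H₃ ⊓ S : Subgroup A) * Nat.card (H₄ ⊓ S : Subgroup A) ≤
      Nat.card S * Nat.card (H₃ ⊓ H₄ : Subgroup A) := by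
    calc Nat.card (H₃ ⊓ S : Subgroup A) * Nat.card (H₄ ⊓ S : Subgroup A)
        = Nat.card ((H₃ ⊓ S) ⊔ (H₄ ⊓ S) : Subgroup A) *
          Nat.card ((H₃ ⊓ S) ⊓ (H₄ ⊓ S) : Subgroup A) := (card_sup_mul_card_inf _ _).symm
      _ ≤ _ := Nat.mul_le_mul (Subgroup.card_le_of_le (sup_le inf_le_right inf_le_right))
          (Subgroup.card_le_of_le (by rw [inf_inf_inf_comm, inf_idem]; exact inf_le_left))
  have step4 : Nat.card S * Nat.card (H₁ ⊓ H₂ : Subgroup A) = Nat.card H₁ * Nat.card H₂ :=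
    card_sup_mul_card_inf _ _
  calc Nat.card (H₁ ⊓ H₂ : Subgroup A) * Nat.card (H₁ ⊓ H₃ : Subgroup A) *
      Nat.card (H₁ ⊓ H₄ : Subgroup A) * Nat.card (H₂ ⊓ H₃ : Subgroup A) *
      Nat.card (H₂ ⊓ H₄ : Subgroup A)
      = (Nat.card (H₁ ⊓ H₃ : Subgroup A) * Nat.card (H₂ ⊓ H₃ : Subgroup A)) *
        ((Nat.card (H₁ ⊓ H₄ : Subgroup A) * Nat.card (H₂ ⊓ H₄ : Subgroup A)) *
          Nat.card (H₁ ⊓ H₂ : Subgroup A)) := by ring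
    _ ≤ (Nat.card (H₃ ⊓ S : Subgroup A) * Nat.card (H₁ ⊓ H₂ ⊓ H₃ : Subgroup A)) *
        ((Nat.card (H₄ ⊓ S : Subgroup A) * Nat.card (H₁ ⊓ H₂ ⊓ H₄ : Subgroup A)) *
          Nat.card (H₁ ⊓ H₂ : Subgroup A)) :=
        Nat.mul_le_mul (step H₃) (Nat.mul_le_mul (step H₄) le_rfl)
    _ = (Nat.card (H₃ ⊓ S : Subgroup A) * Nat.card (H₄ ⊓ S : Subgroup A)) *
        (Nat.card (H₁ ⊓ H₂ : Subgroup A) * (Nat.card (H₁ ⊓ H₂ ⊓ H₃ : Subgroup A) *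
          Nat.card (H₁ ⊓ H₂ ⊓ H₄ : Subgroup A))) := by ring
    _ ≤ (Nat.card S * Nat.card (H₃ ⊓ H₄ : Subgroup A)) *
        (Nat.card (H₁ ⊓ H₂ : Subgroup A) * (Nat.card (H₁ ⊓ H₂ ⊓ H₃ : Subgroup A) *
          Nat.card (H₁ ⊓ H₂ ⊓ H₄ : Subgroup A))) := Nat.mul_le_mul step3 le_rfl
    _ = (Nat.card S * Nat.card (H₁ ⊓ H₂ : Subgroup A)) *
        (Nat.card (H₃ ⊓ H₄ : Subgroup A) * (Nat.card (H₁ ⊓ H₂ ⊓ H₃ : Subgroup A) *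
          Nat.card (H₁ ⊓ H₂ ⊓ H₄ : Subgroup A))) := by ring
    _ = _ := by rw [step4]; ring


/-- Every finite nilpotent group of nilpotency class at most 2
(i.e. `γ₃(G) = 1`, equivalently `lowerCentralSeries G 2 = ⊥` in Mathlib's indexing)
and of odd order satisfies the Ingleton inequality. -/
theorem classTwo_oddOrder_ingleton
    (G : Type*) [Group G] [Finite G]
    (hclass : (⊤ : Subgroup G).lowerCentralSeries 2 = ⊥)
    (hodd : Odd (Nat.card G))
    (H₁ H₂ H₃ H₄ : Subgroup G) :
    Nat.card (H₁ ⊓ H₂ : Subgroup G) * Nat.card (H₁ ⊓ H₃ : Subgroup G) *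
      Nat.card (H₁ ⊓ H₄ : Subgroup G) * Nat.card (H₂ ⊓ H₃ : Subgroup G) *
      Nat.card (H₂ ⊓ H₄ : Subgroup G) ≤
    Nat.card H₁ * Nat.card H₂ * Nat.card (H₃ ⊓ H₄ : Subgroup G) *
      Nat.card (H₁ ⊓ H₂ ⊓ H₃ : Subgroup G) * Nat.card (H₁ ⊓ H₂ ⊓ H₄ : Subgroup G) := by
  -- commutators are central
  have hcen : ∀ a b : G, ⁅a, b⁆ ∈ Subgroup.center G := by
    intro a b
    have h1 : ⁅a, b⁆ ∈ (⊤ : Subgroup G).lowerCentralSeries 1 := by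
      rw [Subgroup.top_lowerCentralSeries_one]
      exact Subgroup.commutator_mem_commutator (Subgroup.mem_top a) (Subgroup.mem_top b)
    rw [Subgroup.mem_center_iff]
    intro g
    have h2 : ⁅⁅a, b⁆, g⁆ ∈ (⊤ : Subgroup G).lowerCentralSeries 2 :=
      (Subgroup.mem_lowerCentralSeries_succ_iff ⊤ 1 _).mpr
        (Subgroup.subset_closure ⟨⁅a, b⁆, h1, g, Subgroup.mem_top g, rfl⟩)
    rw [hclass, Subgroup.mem_bot] at h2
    exact (commutatorElement_eq_one_iff_mul_comm.mp h2).symm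
  -- the "half" exponent
  obtain ⟨k, hk⟩ := hodd
  have hm : ∀ g : G, g ^ (2 * (k + 1)) = g := by
    intro g
    have h2 : 2 * (k + 1) = Nat.card G + 1 := by omega
    rw [h2, pow_succ, pow_card_eq_one', one_mul]
  letI cg : CommGroup (Baer G) := baerCG (k + 1) hcen hm
  haveI : Finite (Baer G) := inferInstanceAs (Finite G)
  let tr : Subgroup G → Subgroup (Baer G) := fun H =>
    { carrier := H.carrier
      mul_mem' := fun {x y} hx hy =>
        H.mul_mem (H.mul_mem hx hy)
          (Subgroup.pow_mem H
            (H.mul_mem (H.mul_mem (H.mul_mem hy hx) (H.inv_mem hy)) (H.inv_mem hx)) (k + 1))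
      one_mem' := H.one_mem
      inv_mem' := fun {x} hx => H.inv_mem hx }
  have hcard : ∀ H : Subgroup G, Nat.card (tr H) = Nat.card H := fun H =>
    Nat.card_congr ⟨fun a => ⟨a.1, a.2⟩, fun a => ⟨a.1, a.2⟩, fun _ => rfl, fun _ => rfl⟩
  have hinf : ∀ H K : Subgroup G, tr H ⊓ tr K = tr (H ⊓ K) := fun H K =>
    SetLike.ext fun x => Iff.rfl
  have key := abelian_ingleton (tr H₁) (tr H₂) (tr H₃) (tr H₄)
  simp only [hinf] at key
  simpa only [hcard] using key
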